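/- For all integers k ≥ 1, m ≥ 1 and every real number T > 0, |∑_{r=0}^{k} C(k,r) · (−2k+r)_{k−r} · m^r / (2Tπ)^{k−r}| ≥ 2m^k − (m + k/(Tπ))^k, where C(k,r) is the binomial coefficient. -/

import Mathlib

open Real Polynomial

lemma ascPochhammer_eval_prod (n : ℕ) (x : ℝ) :
    (ascPochhammer ℝ n).eval x = ∏ i ∈ Finset.range n, (x + i) := by
  induction n with
  | zero => simp
  | succ n ih =>
    rw [ascPochhammer_succ_right, Finset.prod_range_succ, ← ih]
    simp [Polynomial.eval_mul]

theorem stmt9 (k m : ℕ) (hk : 1 ≤ k) (hm : 1 ≤ m) (T : ℝ) (hT : 0 < T) :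
    2 * (m : ℝ) ^ k - ((m : ℝ) + (k : ℝ) / (T * π)) ^ k ≤
      |∑ r ∈ Finset.range (k + 1), (k.choose r : ℝ) *
        (ascPochhammer ℝ (k - r)).eval (-2 * (k : ℝ) + (r : ℝ)) * (m : ℝ) ^ r /
          (2 * T * π) ^ (k - r)| := by
  have hπ : (0:ℝ) < T * π := mul_pos hT Real.pi_pos
  have h2π : (0:ℝ) < 2 * T * π := by nlinarith [Real.pi_pos]
  set c : ℝ := (k:ℝ) / (T * π) with hcdef
  have hcn : ∀ n : ℕ, c ^ n = (2*(k:ℝ))^n / (2*T*π)^n := by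
    intro n
    rw [hcdef, ← div_pow]
    congr 1
    field_simp
  have key : ∀ r ∈ Finset.range k,
      |(k.choose r : ℝ) * (ascPochhammer ℝ (k - r)).eval (-2 * (k : ℝ) + (r : ℝ)) *
        (m : ℝ) ^ r / (2 * T * π) ^ (k - r)| ≤ (k.choose r : ℝ) * (m:ℝ)^r * c^(k-r) := by
    intro r hr
    rw [Finset.mem_range] at hr
    have hpoch : |(ascPochhammer ℝ (k - r)).eval (-2 * (k : ℝ) + (r : ℝ))| ≤ (2*(k:ℝ))^(k-r) := by
      rw [ascPochhammer_eval_prod]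
      rw [Finset.abs_prod]
      calc ∏ i ∈ Finset.range (k-r), |(-2 * (k : ℝ) + (r : ℝ) + i)|
          ≤ ∏ i ∈ Finset.range (k-r), (2*(k:ℝ)) := by
            apply Finset.prod_le_prod (fun i _ => abs_nonneg _)
            intro i hi
            rw [Finset.mem_range] at hi
            have hik : i < k := lt_of_lt_of_le hi (Nat.sub_le _ _)
            have h1 : (i:ℝ) < (k:ℝ) := by exact_mod_cast hik
            have h2 : (r:ℝ) < (k:ℝ) := by exact_mod_cast hr
            have h3 : (0:ℝ) ≤ (i:ℝ) := Nat.cast_nonneg i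
            have h4 : (0:ℝ) ≤ (r:ℝ) := Nat.cast_nonneg r
            rw [abs_le]
            constructor <;> nlinarith
        _ = (2*(k:ℝ))^(k-r) := by rw [Finset.prod_const, Finset.card_range]
    have hD : (0:ℝ) < (2*T*π)^(k-r) := pow_pos h2π _
    have habs : |(k.choose r : ℝ) * (ascPochhammer ℝ (k - r)).eval (-2 * (k : ℝ) + (r : ℝ)) *
        (m : ℝ) ^ r / (2 * T * π) ^ (k - r)| =
        (k.choose r : ℝ) * |(ascPochhammer ℝ (k - r)).eval (-2 * (k : ℝ) + (r : ℝ))| *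
        (m : ℝ) ^ r / (2 * T * π) ^ (k - r) := by
      rw [abs_div, abs_mul, abs_mul, Nat.abs_cast, abs_pow, Nat.abs_cast, abs_of_pos hD]
    rw [habs]
    have : (k.choose r : ℝ) * (m:ℝ)^r * c^(k-r) =
        (k.choose r : ℝ) * (2*(k:ℝ))^(k-r) * (m:ℝ)^r / (2*T*π)^(k-r) := by
      rw [hcn]; ring
    rw [this]
    gcongr
  rw [Finset.sum_range_succ]
  have hlast : (k.choose k : ℝ) *
      (ascPochhammer ℝ (k - k)).eval (-2 * (k : ℝ) + (k : ℝ)) * (m : ℝ) ^ k /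
        (2 * T * π) ^ (k - k) = (m:ℝ)^k := by
    simp [Nat.sub_self]
  rw [hlast]
  set S := ∑ r ∈ Finset.range k, (k.choose r : ℝ) *
      (ascPochhammer ℝ (k - r)).eval (-2 * (k : ℝ) + (r : ℝ)) * (m : ℝ) ^ r /
        (2 * T * π) ^ (k - r) with hSdef
  have hS : |S| ≤ ∑ r ∈ Finset.range k, (k.choose r : ℝ) * (m:ℝ)^r * c^(k-r) :=
    (Finset.abs_sum_le_sum_abs _ _).trans (Finset.sum_le_sum key)
  have hbin : ((m:ℝ) + c)^k =
      (∑ r ∈ Finset.range k, (k.choose r : ℝ) * (m:ℝ)^r * c^(k-r)) + (m:ℝ)^k := by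
    rw [add_pow, Finset.sum_range_succ, Nat.sub_self, Nat.choose_self]
    simp only [pow_zero, Nat.cast_one, mul_one, one_mul]
    congr 1
    apply Finset.sum_congr rfl
    intro r _
    ring
  have htri : |(m:ℝ)^k| ≤ |S + (m:ℝ)^k| + |S| := by
    have h := abs_add_le (S + (m:ℝ)^k) (-S)
    simp only [abs_neg] at h
    calc |(m:ℝ)^k| = |S + (m:ℝ)^k + -S| := by ring_nf
      _ ≤ |S + (m:ℝ)^k| + |S| := h
  have hmk : |(m:ℝ)^k| = (m:ℝ)^k := abs_of_nonneg (by positivity)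
  rw [hmk] at htri
  linarith
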